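/- Let α₁ ∈ ℂ with α₁ ≠ 0, set ω = (α₁² − 1)/α₁, and define f(x,y) = (ω + α₁x + y, (ω + y)/x) and V(x,y) = (1 + α₁x)(α₁ + α₁x + y)/x. Then for every (x,y) ∈ ℂ² with x ≠ 0 and ω + α₁x + y ≠ 0, one has V(f(x,y)) = α₁·V(x,y). Consequently, if n ≥ 1 is a natural number with α₁ⁿ = 1, then W = Vⁿ satisfies W(f(x,y)) = W(x,y) on the same set, i.e. W is a first integral of f. -/

import Mathlib

/-- For `f(x,y) = (ω + α₁x + y, (ω+y)/x)` with `ω = (α₁²−1)/α₁`, the function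
`V(x,y) = (1+α₁x)(α₁+α₁x+y)/x` satisfies `V∘f = α₁·V`; consequently if
`α₁ⁿ = 1` with `n ≥ 1` then `W = Vⁿ` is a first integral of `f`. -/
theorem stmt9 (α₁ : ℂ) (hα : α₁ ≠ 0) (ω : ℂ) (hω : ω = (α₁ ^ 2 - 1) / α₁)
    (f : ℂ × ℂ → ℂ × ℂ)
    (hf : ∀ x y : ℂ, f (x, y) = (ω + α₁ * x + y, (ω + y) / x))
    (V : ℂ × ℂ → ℂ)
    (hV : ∀ x y : ℂ, V (x, y) = (1 + α₁ * x) * (α₁ + α₁ * x + y) / x) :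
    (∀ x y : ℂ, x ≠ 0 → ω + α₁ * x + y ≠ 0 →
        V (f (x, y)) = α₁ * V (x, y)) ∧
    ∀ n : ℕ, 1 ≤ n → α₁ ^ n = 1 →
      ∀ x y : ℂ, x ≠ 0 → ω + α₁ * x + y ≠ 0 →
        (V (f (x, y))) ^ n = (V (x, y)) ^ n := by
  have key : ∀ x y : ℂ, x ≠ 0 → ω + α₁ * x + y ≠ 0 →
      V (f (x, y)) = α₁ * V (x, y) := by
    intro x y hx hxy
    have hωα : α₁ * ω = α₁ ^ 2 - 1 := by
      rw [hω]; field_simp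
    rw [hf, hV, hV]
    field_simp [hxy]
    linear_combination ((ω + α₁*x + y) * (1 + α₁*x) * x + (1 - x) * (ω + α₁*x + y) * (1 + α₁*x)) * hωα
  refine ⟨key, fun n _ hn x y hx hxy => ?_⟩
  rw [key x y hx hxy, mul_pow, hn, one_mul]
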